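/- arXiv:1903.04416 — 6 statements merged into one kernel-verified Lean document; each statement's English description precedes it below -/
import Mathlib

section
/- Let A be a symmetric positive definite n×n real matrix and ρ > 0 satisfy nρ > λ_max(A). Then Z° = (1/n) J_n, where J_n is the all-ones matrix, is the unique maximizer of ⟨A, Z⟩ − nρ·tr(Z) over the set 𝒞 = {Z ∈ ℝ^{n×n} : Z = Zᵀ, Z ⪰ 0, Z·1 = 1, Z ≥ 0 entrywise}. -/
open Matrix BigOperators

/-- The feasible set 𝒞 = {Z : Z = Zᵀ, Z ⪰ 0, Z·1 = 1, Z ≥ 0 entrywise}. -/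
def sdpFeasible {n : ℕ} (Z : Matrix (Fin n) (Fin n) ℝ) : Prop :=
  Z.IsSymm ∧ Z.PosSemidef ∧ (∀ i, ∑ j, Z i j = 1) ∧ (∀ i j, 0 ≤ Z i j)

/-- The objective ⟨A, Z⟩ − nρ·tr(Z), where ⟨A, Z⟩ = tr(AᵀZ). -/
noncomputable def sdpObj {n : ℕ} (A Z : Matrix (Fin n) (Fin n) ℝ) (ρ : ℝ) : ℝ :=
  (Aᵀ * Z).trace - (n : ℝ) * ρ * Z.trace

/-- The all-(1/n) matrix Z° = (1/n)·J_n. -/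
noncomputable def allOnesOverN (n : ℕ) : Matrix (Fin n) (Fin n) ℝ :=
  Matrix.of fun _ _ => 1 / (n : ℝ)

open scoped MatrixOrder in
/-- A nonzero PSD real matrix has positive trace. -/
lemma psd_trace_pos {n : ℕ} {W : Matrix (Fin n) (Fin n) ℝ} (hW : W.PosSemidef)
    (h0 : W ≠ 0) : 0 < W.trace := by
  obtain ⟨B, hWB⟩ := CStarAlgebra.nonneg_iff_eq_star_mul_self.mp hW.nonneg
  rw [Matrix.star_eq_conjTranspose] at hWB; subst hWB
  have hB : B ≠ 0 := by rintro rfl; simp at h0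
  obtain ⟨k, i, hki⟩ : ∃ k i, B k i ≠ 0 := by
    by_contra h; push_neg at h; exact hB (by ext a b; exact h a b)
  have htr : (Bᴴ * B).trace = ∑ i, ∑ k, (B k i) ^ 2 := by
    simp [Matrix.trace, Matrix.diag, Matrix.mul_apply, Matrix.conjTranspose_apply, sq]
  rw [htr]
  refine Finset.sum_pos' (fun j _ => Finset.sum_nonneg fun l _ => sq_nonneg _)
    ⟨i, Finset.mem_univ i, Finset.sum_pos'
      (fun l _ => sq_nonneg _) ⟨k, Finset.mem_univ k, by positivity⟩⟩

/-- Diagonal entries of a PSD real matrix are nonnegative. -/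
lemma psd_diag_nonneg {n : ℕ} {M : Matrix (Fin n) (Fin n) ℝ} (hM : M.PosSemidef)
    (i : Fin n) : 0 ≤ M i i := by
  exact hM.diag_nonneg

/-- Spectral bound: if all eigenvalues of the Hermitian matrix A are < c, and W is PSD
and nonzero, then tr(AW) < c · tr(W). -/
lemma trace_mul_lt {n : ℕ} (hn : 0 < n) {A W : Matrix (Fin n) (Fin n) ℝ}
    (hA : A.IsHermitian) {c : ℝ} (hgap : ∀ i, hA.eigenvalues i < c)
    (hW : W.PosSemidef) (h0 : W ≠ 0) : (A * W).trace < c * W.trace := by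
  haveI : Nonempty (Fin n) := ⟨⟨0, hn⟩⟩
  set U : Matrix (Fin n) (Fin n) ℝ := (hA.eigenvectorUnitary : Matrix (Fin n) (Fin n) ℝ)
    with hU
  set M : Matrix (Fin n) (Fin n) ℝ := Uᴴ * W * U with hMdef
  have hMpsd : M.PosSemidef := hW.conjTranspose_mul_mul_same U
  have hUU : U * star U = 1 := Matrix.mem_unitaryGroup_iff.mp hA.eigenvectorUnitary.2
  have htrM : M.trace = W.trace := by
    rw [hMdef, Matrix.trace_mul_cycle, ← Matrix.star_eq_conjTranspose, hUU, one_mul]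
  have htrAW : (A * W).trace = ∑ i, hA.eigenvalues i * M i i := by
    conv_lhs => rw [hA.spectral_theorem, Unitary.conjStarAlgAut_apply]
    rw [← hU, Matrix.star_eq_conjTranspose]
    rw [mul_assoc (U * diagonal (RCLike.ofReal ∘ hA.eigenvalues)) Uᴴ W,
      Matrix.trace_mul_comm (U * diagonal (RCLike.ofReal ∘ hA.eigenvalues)) (Uᴴ * W),
      ← mul_assoc (Uᴴ * W) U (diagonal (RCLike.ofReal ∘ hA.eigenvalues)),
      Matrix.trace_mul_comm (Uᴴ * W * U) (diagonal (RCLike.ofReal ∘ hA.eigenvalues)),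
      ← hMdef]
    simp [Matrix.trace, Matrix.diag, Matrix.diagonal_mul, Function.comp]
  set cmax : ℝ := Finset.univ.sup' Finset.univ_nonempty hA.eigenvalues with hcmax
  have hcm : cmax < c := by
    rw [hcmax, Finset.sup'_lt_iff]
    exact fun i _ => hgap i
  have htrW : 0 < W.trace := psd_trace_pos hW h0
  have hMtr : M.trace = ∑ i, M i i := by simp [Matrix.trace, Matrix.diag]
  calc (A * W).trace = ∑ i, hA.eigenvalues i * M i i := htrAW
    _ ≤ ∑ i, cmax * M i i := by
        refine Finset.sum_le_sum fun i _ => ?_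
        exact mul_le_mul_of_nonneg_right (Finset.le_sup' _ (Finset.mem_univ i))
          (psd_diag_nonneg hMpsd i)
    _ = cmax * W.trace := by rw [← Finset.mul_sum, ← hMtr, htrM]
    _ < c * W.trace := by exact mul_lt_mul_of_pos_right hcm htrW

/-- For a feasible Z, the matrix Z − (1/n)J is PSD. -/
lemma sub_allOnes_posSemidef {n : ℕ} (hn : 0 < n) {Z : Matrix (Fin n) (Fin n) ℝ}
    (hZ : sdpFeasible Z) : (Z - allOnesOverN n).PosSemidef := by
  obtain ⟨hsym, hpsd, hrow, hnn⟩ := hZ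
  have hn0 : (n : ℝ) ≠ 0 := Nat.cast_ne_zero.mpr hn.ne'
  have hcol : ∀ j, ∑ i, Z i j = 1 := by
    intro j
    rw [show (∑ i, Z i j) = ∑ i, Z j i from Finset.sum_congr rfl fun i _ => hsym.apply j i]
    exact hrow j
  refine Matrix.PosSemidef.of_dotProduct_mulVec_nonneg ?_ ?_
  · ext i j
    simp [Matrix.sub_apply, allOnesOverN, Matrix.conjTranspose_apply, hsym.apply i j]
  · intro x
    set s : ℝ := ∑ i, x i with hs
    set c : ℝ := s / n with hc
    set y : Fin n → ℝ := fun i => x i - c with hy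
    have hZy : ∀ i, ∑ j, Z i j * y j = (∑ j, Z i j * x j) - c := by
      intro i
      simp only [hy, mul_sub, Finset.sum_sub_distrib]
      rw [← Finset.sum_mul, hrow i, one_mul]
    have hsumZx : ∑ i, ∑ j, Z i j * x j = s := by
      rw [Finset.sum_comm]
      calc ∑ j, ∑ i, Z i j * x j = ∑ j, (∑ i, Z i j) * x j := by
            simp [Finset.sum_mul]
        _ = s := by simp [hcol, hs]
    have hq : y ⬝ᵥ (Z *ᵥ y) = x ⬝ᵥ (Z *ᵥ x) - s * c := by
      have lhs : y ⬝ᵥ (Z *ᵥ y) = ∑ i, (x i - c) * ((∑ j, Z i j * x j) - c) := by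
        simp only [dotProduct, Matrix.mulVec, hZy]
        rfl
      have rhs : x ⬝ᵥ (Z *ᵥ x) = ∑ i, x i * ∑ j, Z i j * x j := by
        simp [dotProduct, Matrix.mulVec]
      have expand : ∀ i, (x i - c) * ((∑ j, Z i j * x j) - c) =
          x i * (∑ j, Z i j * x j) - c * (∑ j, Z i j * x j) - c * x i + c * c := by
        intro i; ring
      rw [lhs, rhs]
      simp only [expand, Finset.sum_add_distrib, Finset.sum_sub_distrib, ← Finset.mul_sum,
        hsumZx, ← hs, Finset.sum_const, Finset.card_univ, Fintype.card_fin, nsmul_eq_mul]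
      rw [hc]
      field_simp
      ring
    have hZpos : 0 ≤ y ⬝ᵥ (Z *ᵥ y) := hpsd.dotProduct_mulVec_nonneg y
    have hZ0 : x ⬝ᵥ (allOnesOverN n *ᵥ x) = s * c := by
      have h1 : ∑ j, (1 / (n : ℝ)) * x j = c := by
        rw [← Finset.mul_sum, ← hs, hc]
        ring
      calc x ⬝ᵥ (allOnesOverN n *ᵥ x) = ∑ i, x i * ∑ j, (1 / (n : ℝ)) * x j := by
            simp [dotProduct, Matrix.mulVec, allOnesOverN]
        _ = ∑ i, x i * c := by simp only [h1]
        _ = s * c := by rw [← Finset.sum_mul, ← hs]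
    have hsub : x ⬝ᵥ ((Z - allOnesOverN n) *ᵥ x) = x ⬝ᵥ (Z *ᵥ x) - s * c := by
      rw [Matrix.sub_mulVec, dotProduct_sub, hZ0]
    rw [show star x = x from rfl, hsub]
    linarith [hq, hZpos]

/-- If A is symmetric positive definite and nρ > λ_max(A), then Z° = (1/n)·J_n is the
unique maximizer of ⟨A,Z⟩ − nρ·tr(Z) over 𝒞. -/
theorem sdp_unique_max_allones {n : ℕ} (hn : 0 < n)
    (A : Matrix (Fin n) (Fin n) ℝ) (hA : A.PosDef) (ρ : ℝ) (hρ : 0 < ρ)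
    (hgap : ∀ i, hA.1.eigenvalues i < (n : ℝ) * ρ) :
    sdpFeasible (allOnesOverN n) ∧
    ∀ Z : Matrix (Fin n) (Fin n) ℝ, sdpFeasible Z → Z ≠ allOnesOverN n →
      sdpObj A Z ρ < sdpObj A (allOnesOverN n) ρ := by
  have hn0 : (n : ℝ) ≠ 0 := Nat.cast_ne_zero.mpr hn.ne'
  have hfeas : sdpFeasible (allOnesOverN n) := by
    refine ⟨?_, Matrix.PosSemidef.of_dotProduct_mulVec_nonneg ?_ ?_, ?_, ?_⟩
    · ext i j; rfl
    · ext i j; simp [allOnesOverN, Matrix.conjTranspose_apply]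
    · intro x
      have h1 : ∑ j, (1 / (n : ℝ)) * x j = (∑ j, x j) / n := by
        rw [← Finset.mul_sum]; ring
      have : star x ⬝ᵥ (allOnesOverN n *ᵥ x) = (∑ j, x j) ^ 2 / n := by
        calc star x ⬝ᵥ (allOnesOverN n *ᵥ x)
            = ∑ i, x i * ∑ j, (1 / (n : ℝ)) * x j := by
              simp [dotProduct, Matrix.mulVec, allOnesOverN]
          _ = ∑ i, x i * ((∑ j, x j) / n) := by simp only [h1]
          _ = (∑ j, x j) ^ 2 / n := by rw [← Finset.sum_mul]; ring
      rw [this]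
      positivity
    · intro i
      simp [allOnesOverN, Finset.sum_const, Finset.card_univ]
      field_simp
    · intro i j
      simp only [allOnesOverN, Matrix.of_apply]
      positivity
  refine ⟨hfeas, fun Z hZ hne => ?_⟩
  have hAt : Aᵀ = A := by simpa [Matrix.IsSymm] using hA.1
  set W : Matrix (Fin n) (Fin n) ℝ := Z - allOnesOverN n with hW
  have hWpsd : W.PosSemidef := sub_allOnes_posSemidef hn hZ
  have hW0 : W ≠ 0 := sub_ne_zero.mpr hne
  have hlt : (A * W).trace < ((n : ℝ) * ρ) * W.trace :=
    trace_mul_lt hn hA.1 hgap hWpsd hW0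
  have hdiff : sdpObj A Z ρ - sdpObj A (allOnesOverN n) ρ
      = (A * W).trace - ((n : ℝ) * ρ) * W.trace := by
    simp only [sdpObj, hAt, hW, Matrix.mul_sub, Matrix.trace_sub]
    ring
  linarith
end

section
/- Let A be a symmetric positive definite n×n real matrix and ρ > 0 satisfy nρ < λ_min(A). Then the identity matrix I_n is the unique maximizer of ⟨A, Z⟩ − nρ·tr(Z) over the set 𝒞 = {Z ∈ ℝ^{n×n} : Z = Zᵀ, Z ⪰ 0, Z·1 = 1, Z ≥ 0 entrywise}. -/
open Matrix BigOperators

lemma conj_diag_posDef {n : ℕ} (U : Matrix (Fin n) (Fin n) ℝ)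
    (hU : U ∈ Matrix.unitaryGroup (Fin n) ℝ)
    (d : Fin n → ℝ) (hd : ∀ i, 0 < d i) : (U * diagonal d * Uᴴ).PosDef := by
  have hD : (diagonal d).PosDef := Matrix.PosDef.diagonal hd
  apply Matrix.PosDef.of_dotProduct_mulVec_pos
  · exact Matrix.isHermitian_mul_mul_conjTranspose U hD.1
  · intro x hx
    have hUu : IsUnit Uᴴ := by
      have : IsUnit U := (Unitary.toUnits (⟨U, hU⟩ : Matrix.unitaryGroup (Fin n) ℝ)).isUnit
      simpa using this.star
    have hy : Uᴴ *ᵥ x ≠ 0 := by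
      intro h
      exact hx (by simpa using (Matrix.mulVec_injective_iff_isUnit.mpr hUu) (by simpa using h))
    have := hD.dotProduct_mulVec_pos hy
    have hrw : U * diagonal d * Uᴴ = (Uᴴ)ᴴ * diagonal d * Uᴴ := by
      rw [conjTranspose_conjTranspose]
    rw [hrw]
    simpa only [star_mulVec, dotProduct_mulVec, vecMul_vecMul] using this

lemma shift_posDef {n : ℕ} (A : Matrix (Fin n) (Fin n) ℝ) (hA : A.PosDef) (c : ℝ)
    (hc : ∀ i, c < hA.1.eigenvalues i) : (A - c • 1).PosDef := by
  have hspec := hA.1.spectral_theorem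
  rw [Unitary.conjStarAlgAut_apply, Matrix.star_eq_conjTranspose] at hspec
  set U : Matrix (Fin n) (Fin n) ℝ := (hA.1.eigenvectorUnitary : Matrix (Fin n) (Fin n) ℝ) with hUdef
  have hUmem : U ∈ Matrix.unitaryGroup (Fin n) ℝ := (hA.1.eigenvectorUnitary).2
  have hUU : U * Uᴴ = 1 := by
    have := (Matrix.mem_unitaryGroup_iff).mp hUmem
    simpa [Matrix.star_eq_conjTranspose] using this
  have key : A - c • 1 = U * diagonal (fun i => hA.1.eigenvalues i - c) * Uᴴ := by
    have h1 : diagonal (fun i => hA.1.eigenvalues i - c)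
        = diagonal (RCLike.ofReal ∘ hA.1.eigenvalues) - c • (1 : Matrix (Fin n) (Fin n) ℝ) := by
      rw [smul_one_eq_diagonal, ← diagonal_sub]
      congr 1
    rw [h1, Matrix.mul_sub, Matrix.sub_mul, ← hspec]
    congr 1
    rw [Matrix.mul_smul, Matrix.smul_mul, Matrix.mul_one, hUU]
  rw [key]
  exact conj_diag_posDef U hUmem _ (fun i => sub_pos.mpr (hc i))

lemma posDef_conj {n : ℕ} (P B : Matrix (Fin n) (Fin n) ℝ) (hP : P.PosDef) (hB : IsUnit B) :
    (Bᴴ * P * B).PosDef := by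
  refine Matrix.PosDef.of_dotProduct_mulVec_pos (Matrix.isHermitian_conjTranspose_mul_mul B hP.1) fun x hx => ?_
  have hy : B *ᵥ x ≠ 0 := by
    intro h
    exact hx ((Matrix.mulVec_injective_iff_isUnit.mpr hB) (by simpa using h))
  simpa only [star_mulVec, dotProduct_mulVec, vecMul_vecMul] using hP.dotProduct_mulVec_pos hy

lemma posDef_diag_pos {n : ℕ} (M : Matrix (Fin n) (Fin n) ℝ) (hM : M.PosDef) (i : Fin n) :
    0 < M i i := by
  have h1 : (Pi.single i 1 : Fin n → ℝ) ≠ 0 := by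
    intro h
    have := congrFun h i
    simp at this
  have := hM.dotProduct_mulVec_pos h1
  simpa [dotProduct, mulVec, Pi.single_apply, Finset.sum_ite_eq, mul_comm] using this

lemma trace_mul_pos {n : ℕ} (P Q : Matrix (Fin n) (Fin n) ℝ) (hP : P.PosDef)
    (hQ : Q.PosSemidef) (hQ0 : Q ≠ 0) : 0 < (P * Q).trace := by
  have hspec := hQ.1.spectral_theorem
  rw [Unitary.conjStarAlgAut_apply, Matrix.star_eq_conjTranspose] at hspec
  set U : Matrix (Fin n) (Fin n) ℝ := (hQ.1.eigenvectorUnitary : Matrix (Fin n) (Fin n) ℝ) with hUdef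
  have hUmem : U ∈ Matrix.unitaryGroup (Fin n) ℝ := (hQ.1.eigenvectorUnitary).2
  have hUu : IsUnit U := (Unitary.toUnits (⟨U, hUmem⟩ : Matrix.unitaryGroup (Fin n) ℝ)).isUnit
  set μ : Fin n → ℝ := hQ.1.eigenvalues with hμdef
  have hdg : diagonal (RCLike.ofReal ∘ μ) = diagonal μ := rfl
  rw [hdg] at hspec
  have hM : (Uᴴ * P * U).PosDef := posDef_conj P U hP hUu
  have htr : (P * Q).trace = ((Uᴴ * P * U) * diagonal μ).trace := by
    rw [hspec, ← Matrix.mul_assoc, ← Matrix.mul_assoc]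
    rw [Matrix.trace_mul_cycle (P * U) (diagonal μ) Uᴴ]
    simp only [Matrix.mul_assoc]
  have hsum : ((Uᴴ * P * U) * diagonal μ).trace = ∑ i, (Uᴴ * P * U) i i * μ i := by
    simp [Matrix.trace, Matrix.diag, Matrix.mul_diagonal]
  have hex : ∃ j, μ j ≠ 0 := by
    by_contra h
    push_neg at h
    apply hQ0
    rw [hspec]
    have : diagonal μ = 0 := by
      ext i j
      by_cases hij : i = j <;> simp [diagonal, hij, h]
    simp [this]
  obtain ⟨j, hj⟩ := hex
  rw [htr, hsum]
  apply Finset.sum_pos' (fun i _ => mul_nonneg (posDef_diag_pos _ hM i).le (hQ.eigenvalues_nonneg i))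
  exact ⟨j, Finset.mem_univ j, mul_pos (posDef_diag_pos _ hM j)
    (lt_of_le_of_ne (hQ.eigenvalues_nonneg j) (Ne.symm hj))⟩

lemma one_sub_psd {n : ℕ} (Z : Matrix (Fin n) (Fin n) ℝ) (hsym : Z.IsSymm)
    (hherm : Z.IsHermitian) (hrow : ∀ i, ∑ j, Z i j = 1) (hpos : ∀ i j, 0 ≤ Z i j) :
    (1 - Z : Matrix (Fin n) (Fin n) ℝ).PosSemidef := by
  refine Matrix.PosSemidef.of_dotProduct_mulVec_nonneg (Matrix.isHermitian_one.sub hherm) fun x => ?_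
  have hcol : ∀ j, ∑ i, Z i j = 1 := by
    intro j
    rw [← hrow j]
    exact Finset.sum_congr rfl fun i _ => congrFun (congrFun hsym j) i
  have key : ∑ i, ∑ j, Z i j * (x i - x j)^2
      = 2 * (∑ i, x i * x i - ∑ i, ∑ j, x i * (Z i j * x j)) := by
    have expand : ∀ i, ∑ j, Z i j * (x i - x j)^2
        = ∑ j, (Z i j * x i^2 + Z i j * x j^2 - 2*(x i * (Z i j * x j))) := by
      intro i
      exact Finset.sum_congr rfl fun j _ => by ring
    simp_rw [expand, Finset.sum_sub_distrib, Finset.sum_add_distrib]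
    have T1 : ∑ i : Fin n, ∑ j : Fin n, Z i j * x i ^ 2 = ∑ i, x i * x i := by
      refine Finset.sum_congr rfl fun i _ => ?_
      rw [← Finset.sum_mul, hrow i]
      ring
    have T2 : ∑ i : Fin n, ∑ j : Fin n, Z i j * x j ^ 2 = ∑ i, x i * x i := by
      rw [Finset.sum_comm]
      refine Finset.sum_congr rfl fun j _ => ?_
      rw [← Finset.sum_mul, hcol j]
      ring
    rw [T1, T2]
    simp_rw [← Finset.mul_sum]
    ring
  have hnn : 0 ≤ ∑ i, ∑ j, Z i j * (x i - x j)^2 :=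
    Finset.sum_nonneg fun i _ => Finset.sum_nonneg fun j _ =>
      mul_nonneg (hpos i j) (sq_nonneg _)
  have hq : star x ⬝ᵥ ((1 - Z) *ᵥ x) = ∑ i, x i * x i - ∑ i, ∑ j, x i * (Z i j * x j) := by
    simp only [Matrix.sub_mulVec, Matrix.one_mulVec, dotProduct_sub, star_trivial]
    simp [dotProduct, mulVec, Finset.mul_sum]
  rw [hq]
  linarith [key ▸ hnn]

/-- If A is symmetric positive definite and nρ < λ_min(A), then the identity matrix I_n is
the unique maximizer of ⟨A,Z⟩ − nρ·tr(Z) over 𝒞. -/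
theorem sdp_unique_max_identity {n : ℕ} (hn : 0 < n)
    (A : Matrix (Fin n) (Fin n) ℝ) (hA : A.PosDef) (ρ : ℝ) (hρ : 0 < ρ)
    (hgap : ∀ i, (n : ℝ) * ρ < hA.1.eigenvalues i) :
    sdpFeasible (1 : Matrix (Fin n) (Fin n) ℝ) ∧
    ∀ Z : Matrix (Fin n) (Fin n) ℝ, sdpFeasible Z → Z ≠ 1 →
      sdpObj A Z ρ < sdpObj A (1 : Matrix (Fin n) (Fin n) ℝ) ρ := by
  constructor
  · refine ⟨Matrix.isSymm_one, Matrix.PosDef.one.posSemidef, ?_, ?_⟩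
    · intro i
      simp [Matrix.one_apply]
    · intro i j
      by_cases h : i = j <;> simp [Matrix.one_apply, h]
  · intro Z hZ hZ1
    obtain ⟨hsym, hpsd, hrow, hpos⟩ := hZ
    have hP : (A - ((n : ℝ) * ρ) • 1).PosDef := shift_posDef A hA _ hgap
    have hQ : (1 - Z : Matrix (Fin n) (Fin n) ℝ).PosSemidef := one_sub_psd Z hsym hpsd.1 hrow hpos
    have hQ0 : (1 - Z : Matrix (Fin n) (Fin n) ℝ) ≠ 0 := sub_ne_zero.mpr (Ne.symm hZ1)
    have htr := trace_mul_pos _ _ hP hQ hQ0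
    have hAT : Aᵀ = A := by
      ext i j
      exact congrFun (congrFun hA.1 i) j
    have hdiff : sdpObj A 1 ρ - sdpObj A Z ρ
        = ((A - ((n : ℝ) * ρ) • 1) * (1 - Z)).trace := by
      simp only [sdpObj, hAT, Matrix.sub_mul, Matrix.mul_sub, Matrix.smul_mul, Matrix.one_mul,
        Matrix.mul_one, Matrix.trace_sub, Matrix.trace_smul, Matrix.trace_one, smul_eq_mul]
    linarith
end

section
/- Let Z* be the membership matrix of a partition G₁*,…,G_K* of {1,…,n} with cluster sizes n_k (Z*_{ij} = 1/n_k if i,j ∈ G_k*, else 0). For any symmetric matrix Z with nonnegative entries, row sums one, and Z ⪰ 0, one has ‖Z* − Z*Z‖₁ = 2·Σ_{k=1}^K Σ_{m≠k} ‖Z_{G_k* G_m*}‖₁, where ‖·‖₁ is the entrywise ℓ¹ norm and Z_{G_k* G_m*} denotes the submatrix with rows in G_k* and columns in G_m*. -/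
open Matrix BigOperators

/-- The membership matrix Z* of the partition given by the label map σ. -/
noncomputable def memberMatrix {n K : ℕ} (σ : Fin n → Fin K) : Matrix (Fin n) (Fin n) ℝ :=
  Matrix.of fun i j =>
    if σ i = σ j then (1 : ℝ) / ((Finset.univ.filter fun l => σ l = σ i).card : ℝ) else 0

/-- Entrywise ℓ¹ norm of a matrix. -/
def l1Norm {n : ℕ} (M : Matrix (Fin n) (Fin n) ℝ) : ℝ := ∑ i, ∑ j, |M i j|

/-- ℓ¹ norm of the (G_k*, G_m*) submatrix of Z. -/
def blockL1 {n K : ℕ} (σ : Fin n → Fin K) (Z : Matrix (Fin n) (Fin n) ℝ)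
    (k m : Fin K) : ℝ :=
  ∑ i ∈ Finset.univ.filter (fun i => σ i = k), ∑ j ∈ Finset.univ.filter (fun j => σ j = m), |Z i j|

/-- For the membership matrix Z* of a partition and any Z ∈ 𝒞,
‖Z* − Z*Z‖₁ = 2·Σ_k Σ_{m≠k} ‖Z_{G_k* G_m*}‖₁. -/
theorem l1_memberMatrix_identity {n K : ℕ} (σ : Fin n → Fin K)
    (hσ : Function.Surjective σ)
    (Z : Matrix (Fin n) (Fin n) ℝ) (hZ : sdpFeasible Z) :
    l1Norm (memberMatrix σ - memberMatrix σ * Z) =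
      2 * ∑ k : Fin K, ∑ m ∈ Finset.univ.erase k, blockL1 σ Z k m := by
  obtain ⟨hsymm, _, hrow, hpos⟩ := hZ
  set G : Fin K → Finset (Fin n) := fun k => Finset.univ.filter (fun i => σ i = k) with hG
  have hmemG : ∀ i : Fin n, i ∈ G (σ i) := by intro i; simp [hG]
  have hcardpos : ∀ k : Fin K, (0 : ℝ) < (G k).card := by
    intro k
    obtain ⟨i, hi⟩ := hσ k
    have : i ∈ G k := by simp [hG, hi]
    exact_mod_cast Finset.card_pos.mpr ⟨i, this⟩
  have hcol : ∀ j, ∑ l, Z l j = 1 := by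
    intro j
    have h1 : ∀ l, Z l j = Z j l := fun l => (hsymm.apply j l)
    calc ∑ l, Z l j = ∑ l, Z j l := Finset.sum_congr rfl fun l _ => h1 l
      _ = 1 := hrow j
  set A : Fin K → Fin n → ℝ := fun k j => ∑ l ∈ G k, Z l j with hA
  set B : Fin K → Fin n → ℝ := fun k j => ∑ l ∈ (G k)ᶜ, Z l j with hB
  have hsplit : ∀ k j, A k j + B k j = 1 := by
    intro k j
    rw [hA, hB]
    rw [Finset.sum_add_sum_compl]
    exact hcol j
  have hAnn : ∀ k j, 0 ≤ A k j := fun k j => Finset.sum_nonneg fun l _ => hpos l j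
  have hBnn : ∀ k j, 0 ≤ B k j := fun k j => Finset.sum_nonneg fun l _ => hpos l j
  -- entry formula
  have habs : ∀ i j, |(memberMatrix σ - memberMatrix σ * Z) i j| =
      (1 / ((G (σ i)).card : ℝ)) * (if σ i = σ j then B (σ i) j else A (σ i) j) := by
    intro i j
    have hmul : (memberMatrix σ * Z) i j = (1 / ((G (σ i)).card : ℝ)) * A (σ i) j := by
      rw [Matrix.mul_apply, hA, Finset.mul_sum, hG]
      rw [Finset.sum_filter]
      refine Finset.sum_congr rfl fun l _ => ?_
      simp only [memberMatrix, Matrix.of_apply]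
      by_cases h : σ l = σ i
      · rw [if_pos h, if_pos h.symm]
      · rw [if_neg h, if_neg (fun hh => h hh.symm), zero_mul]
    have hmem : memberMatrix σ i j =
        if σ i = σ j then (1 / ((G (σ i)).card : ℝ)) else 0 := by
      simp only [memberMatrix, Matrix.of_apply, hG]
    rw [Matrix.sub_apply, hmul, hmem]
    by_cases h : σ i = σ j
    · rw [if_pos h, if_pos h]
      have : (1:ℝ) / ((G (σ i)).card : ℝ) - 1 / ((G (σ i)).card : ℝ) * A (σ i) j
          = (1 / ((G (σ i)).card : ℝ)) * B (σ i) j := by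
        have h1 : B (σ i) j = 1 - A (σ i) j := by linarith [hsplit (σ i) j]
        rw [h1]; ring
      rw [this, abs_of_nonneg]
      exact mul_nonneg (by positivity) (hBnn (σ i) j)
    · rw [if_neg h, if_neg h]
      rw [zero_sub, abs_neg, abs_of_nonneg]
      exact mul_nonneg (by positivity) (hAnn (σ i) j)
  -- rewrite the l1 norm
  have key : l1Norm (memberMatrix σ - memberMatrix σ * Z) =
      ∑ k : Fin K, ((∑ j ∈ G k, B k j) + ∑ j ∈ (G k)ᶜ, A k j) := by
    rw [l1Norm]
    have fib : ∑ i, ∑ j, |(memberMatrix σ - memberMatrix σ * Z) i j|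
        = ∑ k : Fin K, ∑ i ∈ G k, ∑ j, |(memberMatrix σ - memberMatrix σ * Z) i j| := by
      rw [hG]
      exact (Finset.sum_fiberwise_of_maps_to (fun i _ => Finset.mem_univ (σ i)) _).symm
    rw [fib]
    refine Finset.sum_congr rfl fun k _ => ?_
    have hterm : ∀ i ∈ G k, ∑ j, |(memberMatrix σ - memberMatrix σ * Z) i j|
        = (1 / ((G k).card : ℝ)) * ((∑ j ∈ G k, B k j) + ∑ j ∈ (G k)ᶜ, A k j) := by
      intro i hi
      have hik : σ i = k := by
        have := hi; rw [hG] at this; simpa using this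
      calc ∑ j, |(memberMatrix σ - memberMatrix σ * Z) i j|
          = ∑ j, (1 / ((G k).card : ℝ)) * (if k = σ j then B k j else A k j) := by
            refine Finset.sum_congr rfl fun j _ => ?_
            rw [habs i j, hik]
        _ = (1 / ((G k).card : ℝ)) * ∑ j, (if k = σ j then B k j else A k j) := by
            rw [Finset.mul_sum]
        _ = (1 / ((G k).card : ℝ)) * ((∑ j ∈ G k, B k j) + ∑ j ∈ (G k)ᶜ, A k j) := by
            congr 1
            rw [Finset.sum_ite]
            congr 1
            · refine Finset.sum_congr ?_ fun j _ => rfl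
              rw [hG]; ext j; simp [eq_comm]
            · refine Finset.sum_congr ?_ fun j _ => rfl
              rw [hG]; ext j; simp [eq_comm]
    rw [Finset.sum_congr rfl hterm, Finset.sum_const, nsmul_eq_mul]
    have hc := hcardpos k
    field_simp
  rw [key]
  -- now express each piece in terms of blockL1
  have hblock : ∀ k m, blockL1 σ Z k m = ∑ i ∈ G k, ∑ j ∈ G m, Z i j := by
    intro k m
    rw [blockL1, hG]
    exact Finset.sum_congr rfl fun i _ => Finset.sum_congr rfl fun j _ =>
      abs_of_nonneg (hpos i j)
  have hcompl : ∀ (k : Fin K) (f : Fin n → ℝ),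
      ∑ l ∈ (G k)ᶜ, f l = ∑ m ∈ Finset.univ.erase k, ∑ l ∈ G m, f l := by
    intro k f
    rw [← Finset.sum_fiberwise_of_maps_to (g := σ) (t := Finset.univ.erase k)
        (fun l hl => ?_)]
    · refine Finset.sum_congr rfl fun m hm => ?_
      refine Finset.sum_congr ?_ fun l _ => rfl
      have hmk : m ≠ k := (Finset.mem_erase.mp hm).1
      ext l
      simp only [Finset.mem_filter, Finset.mem_compl, hG, Finset.mem_univ, true_and]
      constructor
      · rintro ⟨h1, h2⟩; exact h2
      · intro h2
        refine ⟨?_, h2⟩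
        rw [h2]; exact hmk
    · have hl' : σ l ≠ k := by
        simp only [Finset.mem_compl, hG, Finset.mem_filter, Finset.mem_univ, true_and] at hl
        exact hl
      exact Finset.mem_erase.mpr ⟨hl', Finset.mem_univ _⟩
  have hpart1 : ∀ k, ∑ j ∈ G k, B k j = ∑ m ∈ Finset.univ.erase k, blockL1 σ Z m k := by
    intro k
    rw [hB]
    calc ∑ j ∈ G k, ∑ l ∈ (G k)ᶜ, Z l j
        = ∑ j ∈ G k, ∑ m ∈ Finset.univ.erase k, ∑ l ∈ G m, Z l j := by
          exact Finset.sum_congr rfl fun j _ => hcompl k _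
      _ = ∑ m ∈ Finset.univ.erase k, ∑ j ∈ G k, ∑ l ∈ G m, Z l j := Finset.sum_comm
      _ = ∑ m ∈ Finset.univ.erase k, blockL1 σ Z m k := by
          refine Finset.sum_congr rfl fun m _ => ?_
          rw [hblock m k]
          exact Finset.sum_comm
  have hpart2 : ∀ k, ∑ j ∈ (G k)ᶜ, A k j = ∑ m ∈ Finset.univ.erase k, blockL1 σ Z k m := by
    intro k
    rw [hA, hcompl k]
    refine Finset.sum_congr rfl fun m _ => ?_
    rw [hblock k m]
    exact Finset.sum_comm
  have hswap : ∑ k : Fin K, ∑ m ∈ Finset.univ.erase k, blockL1 σ Z m k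
      = ∑ k : Fin K, ∑ m ∈ Finset.univ.erase k, blockL1 σ Z k m := by
    refine Finset.sum_comm' (s' := fun m => Finset.univ.erase m) (t' := Finset.univ)
      (fun x y => ?_)
    simp only [Finset.mem_univ, Finset.mem_erase, true_and, and_true]
    exact ne_comm
  calc ∑ k : Fin K, ((∑ j ∈ G k, B k j) + ∑ j ∈ (G k)ᶜ, A k j)
      = ∑ k : Fin K, ((∑ m ∈ Finset.univ.erase k, blockL1 σ Z m k)
          + ∑ m ∈ Finset.univ.erase k, blockL1 σ Z k m) := by
        exact Finset.sum_congr rfl fun k _ => by rw [hpart1 k, hpart2 k]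
    _ = 2 * ∑ k : Fin K, ∑ m ∈ Finset.univ.erase k, blockL1 σ Z k m := by
        rw [Finset.sum_add_distrib, hswap]; ring
end

section
/- Let Z* be the membership matrix of a partition of {1,…,n} with cluster sizes n₁,…,n_K. For any Z in 𝒞 = {Z : Z = Zᵀ, Z ⪰ 0, Z·1 = 1, Z ≥ 0} (no trace constraint), one has ‖(I − Z*) Z (I − Z*)‖_* ≤ Σ_{k=1}^K Σ_{m≠k} (1/n_k)·‖Z_{G_k* G_m*}‖₁ + tr(Z) − tr(Z*). -/
open Matrix BigOperators

/-- Nuclear norm of a matrix: the sum of its singular values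
(square roots of the eigenvalues of MᴴM). -/
noncomputable def nuclearNorm {n : ℕ} (M : Matrix (Fin n) (Fin n) ℝ) : ℝ :=
  ∑ i, Real.sqrt ((Matrix.isHermitian_conjTranspose_mul_self M).eigenvalues i)

/-- Size n_k of the k-th cluster. -/
def clusterSize {n K : ℕ} (σ : Fin n → Fin K) (k : Fin K) : ℕ :=
  (Finset.univ.filter fun i => σ i = k).card

/- ---------- auxiliary lemmas ---------- -/

open scoped MatrixOrder

lemma trace_sqrt_aux {n : ℕ} {A : Matrix (Fin n) (Fin n) ℝ} (hA : A.PosSemidef) :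
    (CFC.sqrt A).trace = ∑ i, Real.sqrt (hA.1.eigenvalues i) := by
  have h1 : (star (hA.1.eigenvectorUnitary.1 : Matrix (Fin n) (Fin n) ℝ)) *
      hA.1.eigenvectorUnitary.1 = 1 := by
    exact Unitary.coe_star_mul_self hA.1.eigenvectorUnitary
  rw [CFC.sqrt_eq_cfc, cfc_nnreal_eq_real _ A, hA.1.cfc_eq, IsHermitian.cfc, Unitary.conjStarAlgAut_apply,
    Matrix.trace_mul_cycle, h1, one_mul, Matrix.trace_diagonal]
  simp [hA.eigenvalues_nonneg]

lemma nuclearNorm_eq_trace {n : ℕ} {M : Matrix (Fin n) (Fin n) ℝ} (hM : M.PosSemidef) :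
    nuclearNorm M = M.trace := by
  have hsq : Mᴴ * M = M ^ 2 := by rw [hM.1.eq, pow_two]
  have hP : (Mᴴ * M).PosSemidef := Matrix.posSemidef_conjTranspose_mul_self M
  have hMs : M = CFC.sqrt (Mᴴ * M) := (CFC.sqrt_unique (hsq.trans (pow_two M)).symm hM.nonneg).symm
  have := trace_sqrt_aux hP
  rw [← hMs] at this
  rw [nuclearNorm, ← this]

lemma memberMatrix_apply {n K : ℕ} (σ : Fin n → Fin K) (i j : Fin n) :
    memberMatrix σ i j = if σ i = σ j then (1 : ℝ) / (clusterSize σ (σ i) : ℝ) else 0 := rfl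

lemma memberMatrix_transpose {n K : ℕ} (σ : Fin n → Fin K) :
    (memberMatrix σ)ᵀ = memberMatrix σ := by
  ext i j
  simp only [Matrix.transpose_apply, memberMatrix_apply]
  by_cases h : σ i = σ j
  · rw [if_pos h.symm, if_pos h, h]
  · rw [if_neg (fun hh => h hh.symm), if_neg h]

lemma memberMatrix_conjTranspose {n K : ℕ} (σ : Fin n → Fin K) :
    (memberMatrix σ)ᴴ = memberMatrix σ := by
  rw [Matrix.conjTranspose, memberMatrix_transpose]
  ext i j; simp

lemma clusterSize_pos {n K : ℕ} (σ : Fin n → Fin K) (i : Fin n) :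
    0 < clusterSize σ (σ i) :=
  Finset.card_pos.2 ⟨i, by simp [clusterSize]⟩

lemma memberMatrix_idem {n K : ℕ} (σ : Fin n → Fin K) :
    memberMatrix σ * memberMatrix σ = memberMatrix σ := by
  ext i j
  rw [Matrix.mul_apply]
  simp only [memberMatrix_apply]
  by_cases h : σ i = σ j
  · rw [if_pos h]
    have key : ∀ x : Fin n, (if σ i = σ x then (1:ℝ)/(clusterSize σ (σ i) : ℝ) else 0) *
        (if σ x = σ j then (1:ℝ)/(clusterSize σ (σ x) : ℝ) else 0) =
        if σ x = σ i then ((1:ℝ)/(clusterSize σ (σ i) : ℝ)) * ((1:ℝ)/(clusterSize σ (σ i) : ℝ))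
          else 0 := by
      intro x
      by_cases hx : σ x = σ i
      · rw [if_pos hx.symm, if_pos (hx.trans h), if_pos hx, hx]
      · rw [if_neg (fun hh => hx hh.symm), zero_mul, if_neg hx]
    rw [Finset.sum_congr rfl (fun x _ => key x), ← Finset.sum_filter, Finset.sum_const,
      nsmul_eq_mul]
    have hc : ((Finset.univ.filter fun x => σ x = σ i).card : ℝ) = (clusterSize σ (σ i) : ℝ) := rfl
    rw [hc]
    have hpos : (0:ℝ) < (clusterSize σ (σ i) : ℝ) := by exact_mod_cast clusterSize_pos σ i
    field_simp
  · rw [if_neg h]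
    apply Finset.sum_eq_zero
    intro x _
    by_cases hx : σ i = σ x
    · rw [if_neg (fun hh => h (hx.trans hh)), mul_zero]
    · rw [if_neg hx, zero_mul]

lemma memberMatrix_trace {n K : ℕ} (σ : Fin n → Fin K) (hσ : Function.Surjective σ) :
    (memberMatrix σ).trace = (K : ℝ) := by
  have h1 : (memberMatrix σ).trace = ∑ i : Fin n, (1:ℝ)/(clusterSize σ (σ i) : ℝ) := by
    apply Finset.sum_congr rfl
    intro i _
    simp [Matrix.diag, memberMatrix_apply]
  rw [h1, ← Finset.sum_fiberwise Finset.univ σ (fun i => (1:ℝ)/(clusterSize σ (σ i) : ℝ))]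
  have h2 : ∀ k : Fin K,
      (∑ i ∈ Finset.univ.filter (fun i => σ i = k), (1:ℝ)/(clusterSize σ (σ i) : ℝ)) = 1 := by
    intro k
    obtain ⟨i₀, hi₀⟩ := hσ k
    have hck : 0 < clusterSize σ k := hi₀ ▸ clusterSize_pos σ i₀
    have : ∀ i ∈ Finset.univ.filter (fun i => σ i = k),
        (1:ℝ)/(clusterSize σ (σ i) : ℝ) = (1:ℝ)/(clusterSize σ k : ℝ) := by
      intro i hi
      rw [Finset.mem_filter] at hi
      rw [hi.2]
    rw [Finset.sum_congr rfl this, Finset.sum_const, nsmul_eq_mul]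
    have hc : (Finset.univ.filter fun i => σ i = k).card = clusterSize σ k := rfl
    rw [hc]
    have : (clusterSize σ k : ℝ) ≠ 0 := by exact_mod_cast hck.ne'
    field_simp
  rw [Finset.sum_congr rfl (fun k _ => h2 k)]
  simp

lemma trace_member_mul {n K : ℕ} (σ : Fin n → Fin K) (hσ : Function.Surjective σ)
    (Z : Matrix (Fin n) (Fin n) ℝ) (hZ : sdpFeasible Z) :
    (memberMatrix σ * Z).trace = (memberMatrix σ).trace
      - ∑ k : Fin K, ∑ m ∈ Finset.univ.erase k, (1 / (clusterSize σ k : ℝ)) * blockL1 σ Z k m := by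
  obtain ⟨hsymm, _, hrow, hnonneg⟩ := hZ
  have happly : ∀ i j, Z j i = Z i j := by
    intro i j
    have := congrFun (congrFun hsymm i) j
    simpa [Matrix.transpose_apply] using this
  -- step 1: trace(P*Z) = ∑_i (1/c(σ i)) * ∑_{j : σ j = σ i} Z i j
  have step1 : (memberMatrix σ * Z).trace =
      ∑ i : Fin n, (1:ℝ)/(clusterSize σ (σ i) : ℝ) *
        ∑ j ∈ Finset.univ.filter (fun j => σ j = σ i), Z i j := by
    rw [Matrix.trace]
    apply Finset.sum_congr rfl
    intro i _
    rw [Matrix.diag, Matrix.mul_apply]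
    have hterm : ∀ j, memberMatrix σ i j * Z j i =
        if σ j = σ i then (1:ℝ)/(clusterSize σ (σ i) : ℝ) * Z i j else 0 := by
      intro j
      rw [memberMatrix_apply, happly]
      by_cases h : σ j = σ i
      · rw [if_pos h.symm, if_pos h]
      · rw [if_neg (fun hh => h hh.symm), if_neg h, zero_mul]
    rw [Finset.sum_congr rfl (fun j _ => hterm j), ← Finset.sum_filter, Finset.mul_sum]
  rw [step1, ← Finset.sum_fiberwise Finset.univ σ
    (fun i => (1:ℝ)/(clusterSize σ (σ i) : ℝ) *
        ∑ j ∈ Finset.univ.filter (fun j => σ j = σ i), Z i j)]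
  -- inner rewrite on each fiber
  have step2 : ∀ k : Fin K,
      (∑ i ∈ Finset.univ.filter (fun i => σ i = k),
        (1:ℝ)/(clusterSize σ (σ i) : ℝ) *
          ∑ j ∈ Finset.univ.filter (fun j => σ j = σ i), Z i j)
      = 1 - ∑ m ∈ Finset.univ.erase k, (1 / (clusterSize σ k : ℝ)) * blockL1 σ Z k m := by
    intro k
    obtain ⟨i₀, hi₀⟩ := hσ k
    have hck : 0 < clusterSize σ k := hi₀ ▸ clusterSize_pos σ i₀
    have hckR : (clusterSize σ k : ℝ) ≠ 0 := by exact_mod_cast hck.ne'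
    have hfiber : ∀ i ∈ Finset.univ.filter (fun i => σ i = k),
        (1:ℝ)/(clusterSize σ (σ i) : ℝ) *
          ∑ j ∈ Finset.univ.filter (fun j => σ j = σ i), Z i j
        = (1:ℝ)/(clusterSize σ k : ℝ) *
          (1 - ∑ m ∈ Finset.univ.erase k, ∑ j ∈ Finset.univ.filter (fun j => σ j = m), Z i j) := by
      intro i hi
      rw [Finset.mem_filter] at hi
      rw [hi.2]
      congr 1
      -- ∑_{j : σ j = k} Z i j = 1 - ∑_{m ≠ k} ∑_{j : σ j = m} Z i j
      have htot : (∑ m : Fin K, ∑ j ∈ Finset.univ.filter (fun j => σ j = m), Z i j) = 1 := by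
        rw [Finset.sum_fiberwise Finset.univ σ (fun j => Z i j)]
        exact hrow i
      have hsplit := Finset.add_sum_erase Finset.univ
        (fun m => ∑ j ∈ Finset.univ.filter (fun j => σ j = m), Z i j) (Finset.mem_univ k)
      rw [htot] at hsplit
      linarith
    rw [Finset.sum_congr rfl hfiber, ← Finset.mul_sum, Finset.sum_sub_distrib, Finset.sum_const,
      nsmul_eq_mul]
    have hc : (Finset.univ.filter fun i => σ i = k).card = clusterSize σ k := rfl
    rw [hc, Finset.sum_comm, mul_sub]
    have : (1:ℝ)/(clusterSize σ k : ℝ) * ((clusterSize σ k : ℝ) * 1) = 1 := by field_simp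
    rw [this]
    congr 1
    rw [Finset.mul_sum]
    apply Finset.sum_congr rfl
    intro m _
    rw [blockL1]
    have : (∑ i ∈ Finset.univ.filter (fun i => σ i = k),
        ∑ j ∈ Finset.univ.filter (fun j => σ j = m), |Z i j|)
        = ∑ i ∈ Finset.univ.filter (fun i => σ i = k),
          ∑ j ∈ Finset.univ.filter (fun j => σ j = m), Z i j := by
      apply Finset.sum_congr rfl; intro i _
      apply Finset.sum_congr rfl; intro j _
      exact abs_of_nonneg (hnonneg i j)
    rw [this]
  rw [Finset.sum_congr rfl (fun k _ => step2 k), Finset.sum_sub_distrib, Finset.sum_const,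
    nsmul_eq_mul, mul_one, memberMatrix_trace σ hσ]
  simp

/-- For any Z ∈ 𝒞 (no trace constraint),
‖(I − Z*)Z(I − Z*)‖_* ≤ Σ_k Σ_{m≠k} (1/n_k)·‖Z_{G_k* G_m*}‖₁ + tr(Z) − tr(Z*). -/
theorem nuclear_offdiag_bound {n K : ℕ} (σ : Fin n → Fin K)
    (hσ : Function.Surjective σ)
    (Z : Matrix (Fin n) (Fin n) ℝ) (hZ : sdpFeasible Z) :
    nuclearNorm ((1 - memberMatrix σ) * Z * (1 - memberMatrix σ)) ≤
      (∑ k : Fin K, ∑ m ∈ Finset.univ.erase k, (1 / (clusterSize σ k : ℝ)) * blockL1 σ Z k m)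
        + Z.trace - (memberMatrix σ).trace := by
  set P := memberMatrix σ with hP
  have hQ : (1 - P)ᴴ = 1 - P := by
    rw [Matrix.conjTranspose_sub, Matrix.conjTranspose_one, hP, memberMatrix_conjTranspose]
  have hpsd : ((1 - P) * Z * (1 - P)).PosSemidef := by
    have := hZ.2.1.conjTranspose_mul_mul_same (1 - P)
    rwa [hQ] at this
  rw [nuclearNorm_eq_trace hpsd]
  -- expand the trace
  have hexp : ((1 - P) * Z * (1 - P)).trace = Z.trace - (P * Z).trace := by
    have e1 : (1 - P) * Z * (1 - P) = Z - Z * P - (P * Z - P * Z * P) := by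
      rw [sub_mul, sub_mul, one_mul, mul_sub, mul_sub, mul_one, mul_one]
    rw [e1, Matrix.trace_sub, Matrix.trace_sub, Matrix.trace_sub]
    have e2 : (Z * P).trace = (P * Z).trace := Matrix.trace_mul_comm Z P
    have e3 : (P * Z * P).trace = (P * Z).trace := by
      rw [Matrix.trace_mul_cycle, hP, memberMatrix_idem]
    rw [e2, e3]
    ring
  rw [hexp, trace_member_mul σ hσ Z hZ]
  linarith
end

section
/- Let G₁*,…,G_K* partition {1,…,n} and let A be an n×n real matrix with nonnegative entries. If max_{k≠m} ‖A_{G_k* G_m*}‖_∞ + max_k ‖A_{G_k* G_k*} − N_k^{-1}·1·1ᵀ‖_∞ < min_k (1/N_k) for positive numbers N₁,…,N_K, then there exists a threshold γ > 0 such that for every pair i,j: A_{ij} > γ if and only if i and j lie in the same cluster G_k*. In particular thresholding A at level γ exactly recovers the partition. -/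
open Matrix BigOperators

/-- Thresholding exact recovery: if A has nonnegative entries, all between-cluster entries
are at most a, all within-cluster entries of the k-th cluster differ from N_k⁻¹ by at most b
(a, b encoding the maxima max_{k≠m} ‖A_{G_k* G_m*}‖_∞ and
max_k ‖A_{G_k* G_k*} − N_k⁻¹·11ᵀ‖_∞), and a + b < min_k (1/N_k), then there exists a
threshold γ > 0 such that A_{ij} > γ iff i and j lie in the same cluster, so thresholding
A at level γ exactly recovers the partition encoded by the label map σ. -/
theorem thresholding_exact_recovery {n K : ℕ} (σ : Fin n → Fin K)
    (hσ : Function.Surjective σ)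
    (A : Matrix (Fin n) (Fin n) ℝ) (hApos : ∀ i j, 0 ≤ A i j)
    (N : Fin K → ℝ) (hN : ∀ k, 0 < N k)
    (a b : ℝ) (ha0 : 0 ≤ a) (hb0 : 0 ≤ b)
    (ha : ∀ i j, σ i ≠ σ j → |A i j| ≤ a)
    (hb : ∀ i j, σ i = σ j → |A i j - 1 / N (σ i)| ≤ b)
    (hcond : ∀ k, a + b < 1 / N k) :
    ∃ γ : ℝ, 0 < γ ∧ ∀ i j, (γ < A i j ↔ σ i = σ j) := by
  rcases Nat.eq_zero_or_pos n with hn | hn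
  · subst hn
    exact ⟨1, one_pos, fun i => i.elim0⟩
  · obtain ⟨k0, -, hk0⟩ := Finset.exists_min_image Finset.univ (fun k => 1 / N k)
      ⟨σ ⟨0, hn⟩, Finset.mem_univ _⟩
    refine ⟨(a + (1 / N k0 - b)) / 2, by have := hcond k0; linarith, fun i j => ?_⟩
    constructor
    · intro hγ
      by_contra hne
      have h1 : A i j ≤ a := le_trans (le_abs_self _) (ha i j hne)
      have := hcond k0
      linarith
    · intro heq
      have h1 := abs_le.mp (hb i j heq)
      have h2 : 1 / N k0 ≤ 1 / N (σ i) := hk0 (σ i) (Finset.mem_univ _)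
      have := hcond k0
      linarith [h1.1]
end

section
/- Let P_n be an n×n row-stochastic matrix indexed by states partitioned into G_k* and its complement, and let P_{n,k} be the transition matrix of the restricted chain on G_k*, i.e. [P_{n,k}]_{ij} = κ(X_i,X_j)/Σ_{ℓ∈G_k*} κ(X_i,X_ℓ) where [P_n]_{ij} = κ(X_i,X_j)/Σ_{ℓ=1}^n κ(X_i,X_ℓ) with κ ≥ 0. Suppose the one-step probability of leaving G_k* from any state in G_k* is at most ε ≤ 1. Then for all s ∈ ℕ and all i, j ∈ G_k*: (1 − ε)^s·[P_{n,k}^s]_{ij} ≤ [P_n^s]_{ij} ≤ [P_{n,k}^s]_{ij} + s·ε. In particular ‖[P_n^{2t}]_{G_k* G_k*} − P_{n,k}^{2t}‖_∞ ≤ 2tε. -/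
open Matrix BigOperators

/-- Transition matrix of the full random walk: P_{ij} = κ(X_i,X_j)/Σ_ℓ κ(X_i,X_ℓ). -/
noncomputable def fullP {n : ℕ} (κm : Fin n → Fin n → ℝ) : Matrix (Fin n) (Fin n) ℝ :=
  Matrix.of fun i j => κm i j / ∑ l, κm i l

/-- Transition matrix of the chain restricted to the cluster G:
[P_{n,k}]_{ij} = κ(X_i,X_j)/Σ_{ℓ∈G} κ(X_i,X_ℓ) for i, j ∈ G. -/
noncomputable def restrictedP {n : ℕ} (G : Finset (Fin n)) (κm : Fin n → Fin n → ℝ) :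
    Matrix G G ℝ :=
  Matrix.of fun i j => κm i.1 j.1 / ∑ l ∈ G, κm i.1 l

/-- Comparison between powers of the full chain and of the restricted chain: if the
one-step probability of leaving G from any state of G is at most ε ≤ 1, then for all s
and all i, j ∈ G: (1−ε)^s·[P_{n,k}^s]_{ij} ≤ [P_n^s]_{ij} ≤ [P_{n,k}^s]_{ij} + s·ε.
In particular ‖[P_n^{2t}]_{GG} − P_{n,k}^{2t}‖_∞ ≤ 2tε. -/
theorem restricted_chain_comparison {n : ℕ} (G : Finset (Fin n))
    (κm : Fin n → Fin n → ℝ) (hκ : ∀ i j, 0 ≤ κm i j)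
    (hdfull : ∀ i, 0 < ∑ l, κm i l)
    (hdG : ∀ i ∈ G, 0 < ∑ l ∈ G, κm i l)
    (ε : ℝ) (hε0 : 0 ≤ ε) (hε1 : ε ≤ 1)
    (hleave : ∀ i ∈ G, ∑ j ∈ Gᶜ, (κm i j / ∑ l, κm i l) ≤ ε) :
    (∀ s : ℕ, ∀ i j : G,
      (1 - ε) ^ s * ((restrictedP G κm) ^ s) i j ≤ ((fullP κm) ^ s) i.1 j.1 ∧
      ((fullP κm) ^ s) i.1 j.1 ≤ ((restrictedP G κm) ^ s) i j + (s : ℝ) * ε) ∧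
    (∀ t : ℕ, ∀ i j : G,
      |((fullP κm) ^ (2 * t)) i.1 j.1 - ((restrictedP G κm) ^ (2 * t)) i j|
        ≤ 2 * (t : ℝ) * ε) := by
  set P := fullP κm with hPdef
  set Q := restrictedP G κm with hQdef
  have hPnn : ∀ i j, 0 ≤ P i j := fun i j => div_nonneg (hκ i j) (hdfull i).le
  have hProw : ∀ i, ∑ j, P i j = 1 := fun i => by
    simp only [hPdef, fullP, Matrix.of_apply, ← Finset.sum_div]
    exact div_self (hdfull i).ne'
  have hQnn : ∀ i j : G, 0 ≤ Q i j :=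
    fun i j => div_nonneg (hκ _ _) (hdG i.1 i.2).le
  have hQrow : ∀ i : G, ∑ j, Q i j = 1 := fun i => by
    simp only [hQdef, restrictedP, Matrix.of_apply, ← Finset.sum_div]
    rw [Finset.sum_coe_sort G (fun l => κm i.1 l)]
    exact div_self (hdG i.1 i.2).ne'
  -- powers of P
  have hPsnn : ∀ s i j, 0 ≤ (P ^ s) i j := by
    intro s
    induction s with
    | zero => intro i j; rw [pow_zero]; by_cases h : i = j <;> simp [Matrix.one_apply, h]
    | succ s ih =>
      intro i j
      rw [pow_succ', Matrix.mul_apply]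
      exact Finset.sum_nonneg fun l _ => mul_nonneg (hPnn i l) (ih l j)
  have hPsrow : ∀ s i, ∑ j, (P ^ s) i j = 1 := by
    intro s
    induction s with
    | zero => intro i; simp [Matrix.one_apply]
    | succ s ih =>
      intro i
      simp only [pow_succ', Matrix.mul_apply]
      rw [Finset.sum_comm]
      calc ∑ l, ∑ j, P i l * (P ^ s) l j
          = ∑ l, P i l * ∑ j, (P ^ s) l j := by
            exact Finset.sum_congr rfl fun l _ => (Finset.mul_sum _ _ _).symm
        _ = ∑ l, P i l := Finset.sum_congr rfl fun l _ => by rw [ih l, mul_one]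
        _ = 1 := hProw i
  have hPsle1 : ∀ s i j, (P ^ s) i j ≤ 1 := by
    intro s i j
    calc (P ^ s) i j ≤ ∑ j', (P ^ s) i j' :=
          Finset.single_le_sum (fun l _ => hPsnn s i l) (Finset.mem_univ j)
      _ = 1 := hPsrow s i
  -- powers of Q
  have hQsnn : ∀ s (i j : G), 0 ≤ (Q ^ s) i j := by
    intro s
    induction s with
    | zero => intro i j; rw [pow_zero]; by_cases h : i = j <;> simp [Matrix.one_apply, h]
    | succ s ih =>
      intro i j
      rw [pow_succ', Matrix.mul_apply]
      exact Finset.sum_nonneg fun l _ => mul_nonneg (hQnn i l) (ih l j)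
  have hQsrow : ∀ s (i : G), ∑ j, (Q ^ s) i j = 1 := by
    intro s
    induction s with
    | zero => intro i; simp [Matrix.one_apply]
    | succ s ih =>
      intro i
      simp only [pow_succ', Matrix.mul_apply]
      rw [Finset.sum_comm]
      calc ∑ l, ∑ j, Q i l * (Q ^ s) l j
          = ∑ l, Q i l * ∑ j, (Q ^ s) l j := by
            exact Finset.sum_congr rfl fun l _ => (Finset.mul_sum _ _ _).symm
        _ = ∑ l, Q i l := Finset.sum_congr rfl fun l _ => by rw [ih l, mul_one]
        _ = 1 := hQrow i
  have hQsle1 : ∀ s (i j : G), (Q ^ s) i j ≤ 1 := by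
    intro s i j
    calc (Q ^ s) i j ≤ ∑ j', (Q ^ s) i j' :=
          Finset.single_le_sum (fun l _ => hQsnn s i l) (Finset.mem_univ j)
      _ = 1 := hQsrow s i
  -- degree comparison
  have hdcomp : ∀ i ∈ G, (1 - ε) * (∑ l, κm i l) ≤ ∑ l ∈ G, κm i l := by
    intro i hi
    have h1 : (∑ j ∈ Gᶜ, κm i j) / (∑ l, κm i l) ≤ ε := by
      rw [Finset.sum_div]; exact hleave i hi
    have h2 : ∑ j ∈ Gᶜ, κm i j ≤ ε * ∑ l, κm i l :=
      (div_le_iff₀ (hdfull i)).mp h1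
    have h3 : (∑ l ∈ G, κm i l) + ∑ l ∈ Gᶜ, κm i l = ∑ l, κm i l :=
      Finset.sum_add_sum_compl G _
    nlinarith [hdfull i]
  -- one step comparison
  have hstep_ub : ∀ (i j : G), P i.1 j.1 ≤ Q i j := by
    intro i j
    have hd : 0 < ∑ l ∈ G, κm i.1 l := hdG i.1 i.2
    have hD : 0 < ∑ l, κm i.1 l := hdfull i.1
    have hle : (∑ l ∈ G, κm i.1 l) ≤ ∑ l, κm i.1 l := by
      have := Finset.sum_add_sum_compl G (fun l => κm i.1 l)
      have : 0 ≤ ∑ l ∈ Gᶜ, κm i.1 l := Finset.sum_nonneg fun l _ => hκ _ _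
      linarith [Finset.sum_add_sum_compl G (fun l => κm i.1 l)]
    simp only [hPdef, hQdef, fullP, restrictedP, Matrix.of_apply]
    rw [div_le_div_iff₀ hD hd]
    nlinarith [hκ i.1 j.1]
  have hstep_lb : ∀ (i j : G), (1 - ε) * Q i j ≤ P i.1 j.1 := by
    intro i j
    have hd : 0 < ∑ l ∈ G, κm i.1 l := hdG i.1 i.2
    have hD : 0 < ∑ l, κm i.1 l := hdfull i.1
    have hc := hdcomp i.1 i.2
    simp only [hPdef, hQdef, fullP, restrictedP, Matrix.of_apply]
    rw [mul_div_assoc', div_le_div_iff₀ hd hD]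
    nlinarith [hκ i.1 j.1]
  -- main induction
  have main : ∀ s : ℕ, ∀ i j : G,
      (1 - ε) ^ s * (Q ^ s) i j ≤ (P ^ s) i.1 j.1 ∧
      (P ^ s) i.1 j.1 ≤ (Q ^ s) i j + (s : ℝ) * ε := by
    intro s
    induction s with
    | zero =>
      intro i j
      simp only [pow_zero, Matrix.one_apply, Nat.cast_zero, zero_mul, add_zero, one_mul]
      by_cases h : i = j
      · subst h; simp
      · have h' : i.1 ≠ j.1 := fun hh => h (Subtype.ext hh)
        simp [h, h']
    | succ s ih =>
      intro i j
      have hsplit : (P ^ (s+1)) i.1 j.1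
          = (∑ l ∈ G, P i.1 l * (P ^ s) l j.1) + ∑ l ∈ Gᶜ, P i.1 l * (P ^ s) l j.1 := by
        rw [pow_succ', Matrix.mul_apply, ← Finset.sum_add_sum_compl G]
      have hQmul : (Q ^ (s+1)) i j = ∑ l : G, Q i l * (Q ^ s) l j := by
        rw [pow_succ', Matrix.mul_apply]
      have hGsum : ∀ f : Fin n → ℝ, ∑ l ∈ G, f l = ∑ l : G, f l.1 :=
        fun f => (Finset.sum_coe_sort G f).symm
      constructor
      · -- lower bound
        have h1 : (1 - ε) ^ (s+1) * (Q ^ (s+1)) i j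
            ≤ ∑ l ∈ G, P i.1 l * (P ^ s) l j.1 := by
          rw [hQmul, Finset.mul_sum, hGsum (fun l => P i.1 l * (P ^ s) l j.1)]
          apply Finset.sum_le_sum
          intro l _
          have hP1 := hstep_lb i l
          have hPs := (ih l j).1
          have h1e : 0 ≤ 1 - ε := by linarith
          calc (1 - ε) ^ (s + 1) * (Q i l * (Q ^ s) l j)
              = ((1 - ε) * Q i l) * ((1 - ε) ^ s * (Q ^ s) l j) := by ring
            _ ≤ P i.1 l.1 * ((P ^ s) l.1 j.1) := by
                apply mul_le_mul hP1 hPs (mul_nonneg (pow_nonneg h1e s) (hQsnn s l j))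
                  (hPnn _ _)
        have h2 : 0 ≤ ∑ l ∈ Gᶜ, P i.1 l * (P ^ s) l j.1 :=
          Finset.sum_nonneg fun l _ => mul_nonneg (hPnn _ _) (hPsnn s _ _)
        rw [hsplit]; linarith
      · -- upper bound
        have h1 : ∑ l ∈ G, P i.1 l * (P ^ s) l j.1
            ≤ (Q ^ (s+1)) i j + (s : ℝ) * ε := by
          rw [hQmul, hGsum (fun l => P i.1 l * (P ^ s) l j.1)]
          have : ∑ l : G, P i.1 l.1 * (P ^ s) l.1 j.1
              ≤ ∑ l : G, Q i l * ((Q ^ s) l j + (s : ℝ) * ε) := by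
            apply Finset.sum_le_sum
            intro l _
            exact mul_le_mul (hstep_ub i l) (ih l j).2 (hPsnn s _ _) (hQnn i l)
          calc ∑ l : G, P i.1 l.1 * (P ^ s) l.1 j.1
              ≤ ∑ l : G, Q i l * ((Q ^ s) l j + (s : ℝ) * ε) := this
            _ = (∑ l : G, Q i l * (Q ^ s) l j) + (∑ l : G, Q i l) * ((s : ℝ) * ε) := by
                rw [Finset.sum_mul]; rw [← Finset.sum_add_distrib]; congr 1; ext l; ring
            _ = (∑ l : G, Q i l * (Q ^ s) l j) + (s : ℝ) * ε := by rw [hQrow i, one_mul]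
        have h2 : ∑ l ∈ Gᶜ, P i.1 l * (P ^ s) l j.1 ≤ ε := by
          calc ∑ l ∈ Gᶜ, P i.1 l * (P ^ s) l j.1
              ≤ ∑ l ∈ Gᶜ, P i.1 l :=
                Finset.sum_le_sum fun l _ => by
                  nlinarith [hPnn i.1 l, hPsnn s l j.1, hPsle1 s l j.1]
            _ ≤ ε := by
                have := hleave i.1 i.2
                simpa [hPdef, fullP] using this
        rw [hsplit]
        push_cast
        linarith
  refine ⟨main, ?_⟩
  intro t i j
  have h1 := (main (2 * t) i j).1
  have h2 := (main (2 * t) i j).2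
  have hc : (1 : ℝ) - 2 * t * ε ≤ (1 - ε) ^ (2 * t) := by
    have h := one_add_mul_le_pow (a := -ε) (by linarith) (2 * t)
    have e : (1:ℝ) + -ε = 1 - ε := by ring
    rw [e] at h
    push_cast at h ⊢
    linarith
  have hc1 : (1 - ε) ^ (2 * t) ≤ 1 := pow_le_one₀ (by linarith) (by linarith)
  have hq0 := hQsnn (2 * t) i j
  have hq1 := hQsle1 (2 * t) i j
  rw [abs_le]
  push_cast at h2 ⊢
  constructor
  · nlinarith
  · nlinarith
end
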